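/- Let V, W be finite-dimensional vector spaces, ρ : W → V linear, D_ρ the derivation of Λ•(V ⊕ W) with D_ρ(X,u) = (ρ(u), 0), and inv* the algebra automorphism of Λ•(V ⊕ W) extending the linear map (X,u) ↦ (X+ρ(u), −u). Then for every ω ∈ (Λ^p V) ⊗ (Λ^q W): inv*(ω) = (−1)^q ( ω − D_ρ ω + (1/2!) D_ρ² ω + ⋯ + ((−1)^q/q!) D_ρ^q ω ) = (−1)^q Σ_{j=0}^{q} ((−1)^j/j!) D_ρ^j ω. -/

import Mathlib

set_option maxHeartbeats 1000000

open ExteriorAlgebra Finset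

/-- The subspace `(Λ^p V) ⊗ (Λ^q W) ⊆ Λ^{p+q}(V ⊕ W)`. -/
noncomputable def mixedPiece (V W : Type*) [AddCommGroup V] [Module ℝ V]
    [AddCommGroup W] [Module ℝ W] (p q : ℕ) :
    Submodule ℝ (ExteriorAlgebra ℝ (V × W)) :=
  Submodule.span ℝ { z | ∃ (X : Fin p → V) (u : Fin q → W),
    z = (List.ofFn fun i => ExteriorAlgebra.ι ℝ ((X i, (0 : W)) : V × W)).prod *
        (List.ofFn fun j => ExteriorAlgebra.ι ℝ (((0 : V), u j) : V × W)).prod }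

section Aux
variable {V W : Type*} [AddCommGroup V] [Module ℝ V] [AddCommGroup W] [Module ℝ W]
  (ρ : W →ₗ[ℝ] V)

noncomputable def invMap : (V × W) →ₗ[ℝ] (V × W) :=
  LinearMap.prod (LinearMap.fst ℝ V W + ρ ∘ₗ LinearMap.snd ℝ V W) (-(LinearMap.snd ℝ V W))

variable (D : Module.End ℝ (ExteriorAlgebra ℝ (V × W)))
  (hDder : ∀ a b : ExteriorAlgebra ℝ (V × W), D (a * b) = D a * b + a * D b)
  (hDgen : ∀ (X : V) (u : W),
      D (ExteriorAlgebra.ι ℝ ((X, u) : V × W)) = ExteriorAlgebra.ι ℝ ((ρ u, (0 : W)) : V × W))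

include hDder in
lemma D_one' : D (1 : ExteriorAlgebra ℝ (V × W)) = 0 := by
  have h := hDder 1 1
  simp only [one_mul, mul_one] at h
  exact (left_eq_add.mp h)


include hDder hDgen in
lemma xprod_lemma : ∀ (l : List V),
    D ((l.map fun x => ExteriorAlgebra.ι ℝ ((x, (0:W)) : V × W)).prod) = 0 ∧
    ExteriorAlgebra.map (invMap ρ)
        ((l.map fun x => ExteriorAlgebra.ι ℝ ((x, (0:W)) : V × W)).prod)
      = (l.map fun x => ExteriorAlgebra.ι ℝ ((x, (0:W)) : V × W)).prod := by
  intro l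
  induction l with
  | nil => simpa using D_one' D hDder
  | cons x l ih =>
    constructor
    · have hx : D (ExteriorAlgebra.ι ℝ ((x, (0:W)) : V × W)) = 0 := by
        rw [hDgen x 0]; simp
      simp [List.map_cons, List.prod_cons, hDder, hx, ih.1]
    · have hx : (invMap ρ) ((x, (0:W)) : V × W) = (x, (0:W)) := by
        simp [invMap]
      simp [List.map_cons, List.prod_cons, map_mul, ih.2, ExteriorAlgebra.map_apply_ι, hx]

include hDder in
lemma D_pow_mul (v w : ExteriorAlgebra ℝ (V × W)) (hv : D v = w) (hw : D w = 0) :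
    ∀ (j : ℕ) (b : ExteriorAlgebra ℝ (V × W)),
      (D ^ (j+1)) (b * v) = (D ^ (j+1)) b * v + (j+1) • ((D ^ j) b * w) := by
  intro j
  induction j with
  | zero => intro b; simp [hDder, hv]
  | succ j ih =>
    intro b
    have h2 : ∀ x, D ((D ^ (j+1)) x) = (D ^ (j+2)) x := by
      intro x; rw [pow_succ' D (j+1), Module.End.mul_apply]
    have h3 : ∀ x, D ((D ^ j) x) = (D ^ (j+1)) x := by
      intro x; rw [pow_succ' D j, Module.End.mul_apply]
    have h1 : (D ^ (j+2)) (b * v) = D ((D ^ (j+1)) (b * v)) := (h2 _).symm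
    rw [h1, ih b, map_add, hDder, map_nsmul, hDder, hv, hw, mul_zero, add_zero, h2, h3]
    conv_rhs => rw [succ_nsmul]
    rw [add_assoc, add_comm ((D ^ (j+1)) b * w)]

include hDder hDgen in
lemma key_lemma :
    ∀ (q : ℕ) (u : Fin q → W) (a : ExteriorAlgebra ℝ (V × W)), D a = 0 →
      ExteriorAlgebra.map (invMap ρ) a = a →
      (D ^ (q+1)) (a * (List.ofFn fun j => ExteriorAlgebra.ι ℝ (((0:V), u j) : V × W)).prod) = 0 ∧
      ExteriorAlgebra.map (invMap ρ)
          (a * (List.ofFn fun j => ExteriorAlgebra.ι ℝ (((0:V), u j) : V × W)).prod)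
        = (-1 : ℝ) ^ q • ∑ j ∈ Finset.range (q + 1), (((-1 : ℝ) ^ j / (j.factorial : ℝ)) •
            (D ^ j) (a * (List.ofFn fun j => ExteriorAlgebra.ι ℝ (((0:V), u j) : V × W)).prod)) := by
  intro q
  induction q with
  | zero =>
    intro u a ha hFa
    constructor
    · simpa using ha
    · simpa using hFa
  | succ q ih =>
    intro u a ha hFa
    -- split off the last factor
    set v : ExteriorAlgebra ℝ (V × W) := ExteriorAlgebra.ι ℝ (((0:V), u (Fin.last q)) : V × W) with hvdef
    set w : ExteriorAlgebra ℝ (V × W) :=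
      ExteriorAlgebra.ι ℝ ((ρ (u (Fin.last q)), (0:W)) : V × W) with hwdef
    have hv : D v = w := hDgen 0 (u (Fin.last q))
    have hw : D w = 0 := by rw [hwdef, hDgen (ρ (u (Fin.last q))) 0]; simp
    set b : ExteriorAlgebra ℝ (V × W) :=
      a * (List.ofFn fun j : Fin q => ExteriorAlgebra.ι ℝ (((0:V), u j.castSucc) : V × W)).prod
      with hbdef
    have hsplit : a * (List.ofFn fun j => ExteriorAlgebra.ι ℝ (((0:V), u j) : V × W)).prod
        = b * v := by
      rw [List.ofFn_succ']
      simp [hbdef, hvdef, mul_assoc]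
    obtain ⟨hb0, hbF⟩ := ih (fun j => u j.castSucc) a ha hFa
    have hb0' : (D ^ (q + 2)) b = 0 := by
      rw [pow_succ' D (q+1), Module.End.mul_apply, hb0, map_zero]
    have hL1 := D_pow_mul D hDder v w hv hw
    -- the sum computation
    have hsum : ∑ j ∈ Finset.range (q + 2), (((-1 : ℝ) ^ j / (j.factorial : ℝ)) • (D ^ j) (b * v))
        = (∑ j ∈ Finset.range (q + 1), (((-1 : ℝ) ^ j / (j.factorial : ℝ)) • (D ^ j) b)) * (v - w) := by
      rw [Finset.sum_range_succ']
      have hterm : ∀ j ∈ Finset.range (q + 1),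
          ((-1 : ℝ) ^ (j+1) / ((j+1).factorial : ℝ)) • (D ^ (j+1)) (b * v)
            = ((-1 : ℝ) ^ (j+1) / ((j+1).factorial : ℝ)) • ((D ^ (j+1)) b * v)
              + (-(((-1 : ℝ) ^ j / (j.factorial : ℝ)))) • ((D ^ j) b * w) := by
        intro j _
        rw [hL1 j b, smul_add]
        congr 1
        rw [← Nat.cast_smul_eq_nsmul ℝ (j+1), smul_smul]
        congr 1
        rw [Nat.factorial_succ]
        push_cast
        have hj : ((j.factorial : ℝ)) ≠ 0 := Nat.cast_ne_zero.mpr (Nat.factorial_ne_zero j)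
        field_simp
        ring
      rw [Finset.sum_congr rfl hterm, Finset.sum_add_distrib]
      have e1 : ∑ j ∈ Finset.range (q + 1),
          ((-1 : ℝ) ^ (j+1) / ((j+1).factorial : ℝ)) • ((D ^ (j+1)) b * v)
          + ((-1 : ℝ) ^ 0 / ((0).factorial : ℝ)) • (D ^ 0) (b * v)
          = (∑ j ∈ Finset.range (q + 1), (((-1 : ℝ) ^ j / (j.factorial : ℝ)) • (D ^ j) b)) * v := by
        have : ∑ j ∈ Finset.range (q + 2),
            (((-1 : ℝ) ^ j / (j.factorial : ℝ)) • ((D ^ j) b * v))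
            = ∑ j ∈ Finset.range (q + 1),
            (((-1 : ℝ) ^ j / (j.factorial : ℝ)) • ((D ^ j) b * v)) := by
          rw [Finset.sum_range_succ, hb0]
          simp
        calc ∑ j ∈ Finset.range (q + 1),
              ((-1 : ℝ) ^ (j+1) / ((j+1).factorial : ℝ)) • ((D ^ (j+1)) b * v)
              + ((-1 : ℝ) ^ 0 / ((0).factorial : ℝ)) • (D ^ 0) (b * v)
            = ∑ j ∈ Finset.range (q + 2),
              (((-1 : ℝ) ^ j / (j.factorial : ℝ)) • ((D ^ j) b * v)) := by
              conv_rhs => rw [Finset.sum_range_succ']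
              congr 1
          _ = ∑ j ∈ Finset.range (q + 1),
              (((-1 : ℝ) ^ j / (j.factorial : ℝ)) • ((D ^ j) b * v)) := this
          _ = (∑ j ∈ Finset.range (q + 1), (((-1 : ℝ) ^ j / (j.factorial : ℝ)) • (D ^ j) b)) * v := by
              rw [Finset.sum_mul]
              exact Finset.sum_congr rfl fun j _ => (smul_mul_assoc _ _ _).symm
      have e2 : ∑ j ∈ Finset.range (q + 1),
          (-(((-1 : ℝ) ^ j / (j.factorial : ℝ)))) • ((D ^ j) b * w)
          = -((∑ j ∈ Finset.range (q + 1), (((-1 : ℝ) ^ j / (j.factorial : ℝ)) • (D ^ j) b)) * w) := by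
        rw [Finset.sum_mul, ← Finset.sum_neg_distrib]
        exact Finset.sum_congr rfl fun j _ => by
          rw [neg_smul, smul_mul_assoc]
      rw [add_right_comm, e1, e2, mul_sub, ← sub_eq_add_neg]
    have hFv : ExteriorAlgebra.map (invMap ρ) v = w - v := by
      rw [hvdef, hwdef, ExteriorAlgebra.map_apply_ι]
      have : (invMap ρ) (((0:V), u (Fin.last q)) : V × W)
          = ((ρ (u (Fin.last q)), (0:W)) : V × W) - (((0:V), u (Fin.last q)) : V × W) := by
        simp [invMap, Prod.ext_iff]
      rw [this, map_sub]
    have hb1 : (D ^ (q+1)) b = 0 := hb0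
    constructor
    · rw [hsplit, hL1 (q+1) b, hb0', zero_mul, zero_add, hb1, zero_mul, smul_zero]
    · rw [hsplit, map_mul, hbF, hFv, hsum]
      rw [smul_mul_assoc, pow_succ]
      rw [mul_smul]
      congr 1
      rw [neg_one_smul, ← mul_neg, neg_sub]
end Aux

/-- for the algebra automorphism `inv*` of `Λ•(V ⊕ W)` extending
`(X,u) ↦ (X+ρ(u), −u)` and the derivation `D_ρ` with `D_ρ(X,u) = (ρ(u),0)`, one has
`inv*(ω) = (−1)^q Σ_{j=0}^{q} ((−1)^j/j!) D_ρ^j ω` for all `ω ∈ (Λ^p V)⊗(Λ^q W)`. -/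
theorem inv_star_formula (V W : Type*) [AddCommGroup V] [Module ℝ V]
    [AddCommGroup W] [Module ℝ W] [FiniteDimensional ℝ V] [FiniteDimensional ℝ W]
    (ρ : W →ₗ[ℝ] V)
    (D : Module.End ℝ (ExteriorAlgebra ℝ (V × W)))
    (hDder : ∀ a b : ExteriorAlgebra ℝ (V × W), D (a * b) = D a * b + a * D b)
    (hDgen : ∀ (X : V) (u : W),
      D (ExteriorAlgebra.ι ℝ ((X, u) : V × W)) = ExteriorAlgebra.ι ℝ ((ρ u, (0 : W)) : V × W))
    (p q : ℕ) :
    ∀ ω ∈ mixedPiece V W p q,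
      ExteriorAlgebra.map
        (LinearMap.prod (LinearMap.fst ℝ V W + ρ ∘ₗ LinearMap.snd ℝ V W)
          (-(LinearMap.snd ℝ V W))) ω
        = (-1 : ℝ) ^ q •
            ∑ j ∈ Finset.range (q + 1), (((-1 : ℝ) ^ j / (j.factorial : ℝ)) • (D ^ j) ω) := by

  intro ω hω
  show ExteriorAlgebra.map (invMap ρ) ω = _
  induction hω using Submodule.span_induction with
  | mem x hx =>
    obtain ⟨X, u, rfl⟩ := hx
    set a : ExteriorAlgebra ℝ (V × W) :=
      (List.ofFn fun i => ExteriorAlgebra.ι ℝ ((X i, (0 : W)) : V × W)).prod with hadef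
    have hmap : (List.ofFn fun i => ExteriorAlgebra.ι ℝ ((X i, (0 : W)) : V × W))
        = (List.ofFn X).map fun x => ExteriorAlgebra.ι ℝ ((x, (0:W)) : V × W) := by
      rw [List.map_ofFn]; rfl
    have hx := xprod_lemma ρ D hDder hDgen (List.ofFn X)
    rw [← hmap] at hx
    exact (key_lemma ρ D hDder hDgen q u a hx.1 hx.2).2
  | zero => simp
  | add x y _ _ hx hy =>
    simp only [map_add, hx, hy, smul_add, Finset.sum_add_distrib]
  | smul c x _ hx =>
    simp only [map_smul, hx, Finset.smul_sum]
    exact Finset.sum_congr rfl fun j _ => by rw [smul_comm c, smul_comm c]
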